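/- arXiv:1602.00197 — 2 statements merged into one kernel-verified Lean document; each statement's English description precedes it below -/
import Mathlib

section
/- For fixed z ∈ ℝ and v ∈ (0,1), the limit as m → ∞ of (1 + z/(√m·v))^(mv−1) · (1 − z/(√m·(1−v)))^(m(1−v)−1) equals exp(−z²/(2v(1−v))). -/
open Filter Real

lemma key_lim (z v : ℝ) (hv0 : 0 < v) (hv1 : v < 1) :
    Tendsto (fun t : ℝ =>
        (v * Real.log (1 + z * t / v) + (1 - v) * Real.log (1 - z * t / (1 - v))) / t ^ 2)
      (nhdsWithin 0 (Set.Ioi 0)) (nhds (-z ^ 2 / (2 * v * (1 - v)))) := by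
  have hv1' : 0 < 1 - v := by linarith
  set c : ℝ := -z ^ 2 / (2 * v * (1 - v)) with hc
  set C : ℝ := 2 * |z| ^ 3 / v ^ 2 + 2 * |z| ^ 3 / (1 - v) ^ 2 with hC
  set δ : ℝ := min (v / (2 * (|z| + 1))) ((1 - v) / (2 * (|z| + 1))) with hδdef
  have hz1 : (0:ℝ) < |z| + 1 := by positivity
  have hδpos : 0 < δ := by
    apply lt_min <;> positivity
  have hbound : ∀ᶠ t in nhdsWithin (0:ℝ) (Set.Ioi 0),
      |(v * Real.log (1 + z * t / v) + (1 - v) * Real.log (1 - z * t / (1 - v))) / t ^ 2 - c|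
        ≤ C * t := by
    filter_upwards [Ioo_mem_nhdsGT_of_mem (Set.mem_Ico.2 ⟨le_refl (0:ℝ), hδpos⟩)] with t ht
    obtain ⟨ht0, htδ⟩ := ht
    have habs1 : |z * t / v| = |z| * t / v := by
      rw [abs_div, abs_mul, abs_of_pos hv0, abs_of_pos ht0]
    have habs2 : |z * t / (1 - v)| = |z| * t / (1 - v) := by
      rw [abs_div, abs_mul, abs_of_pos hv1', abs_of_pos ht0]
    have hx1 : |z * t / v| ≤ 1 / 2 := by
      rw [habs1, div_le_iff₀ hv0]
      have h1 : t ≤ v / (2 * (|z| + 1)) := le_of_lt (lt_of_lt_of_le htδ (min_le_left _ _))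
      calc |z| * t ≤ (|z| + 1) * (v / (2 * (|z| + 1))) := by
            apply mul_le_mul (by linarith) h1 (le_of_lt ht0) (by positivity)
        _ = v / 2 := by field_simp
        _ = 1 / 2 * v := by ring
    have hx2 : |z * t / (1 - v)| ≤ 1 / 2 := by
      rw [habs2, div_le_iff₀ hv1']
      have h1 : t ≤ (1 - v) / (2 * (|z| + 1)) := le_of_lt (lt_of_lt_of_le htδ (min_le_right _ _))
      calc |z| * t ≤ (|z| + 1) * ((1 - v) / (2 * (|z| + 1))) := by
            apply mul_le_mul (by linarith) h1 (le_of_lt ht0) (by positivity)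
        _ = (1 - v) / 2 := by field_simp
        _ = 1 / 2 * (1 - v) := by ring
    have hx1' : |(-(z * t / v))| < 1 := by rw [abs_neg]; linarith
    have hx2' : |z * t / (1 - v)| < 1 := by linarith
    have hR1 := Real.abs_log_sub_add_sum_range_le hx1' 2
    have hR2 := Real.abs_log_sub_add_sum_range_le hx2' 2
    simp only [Finset.sum_range_succ, Finset.sum_range_zero] at hR1 hR2
    set E1 : ℝ := Real.log (1 + z * t / v) - z * t / v + (z * t / v) ^ 2 / 2 with hE1def
    set E2 : ℝ := Real.log (1 - z * t / (1 - v)) + z * t / (1 - v) + (z * t / (1 - v)) ^ 2 / 2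
      with hE2def
    have hE1eq : (0 + (-(z * t / v)) ^ (0 + 1) / ((0:ℕ) + 1)
        + (-(z * t / v)) ^ (1 + 1) / ((1:ℕ) + 1)) + Real.log (1 - -(z * t / v)) = E1 := by
      rw [hE1def, show (1:ℝ) - -(z * t / v) = 1 + z * t / v from by ring]
      push_cast
      ring
    have hE2eq : (0 + (z * t / (1 - v)) ^ (0 + 1) / ((0:ℕ) + 1)
        + (z * t / (1 - v)) ^ (1 + 1) / ((1:ℕ) + 1)) + Real.log (1 - z * t / (1 - v)) = E2 := by
      rw [hE2def]
      push_cast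
      ring
    rw [hE1eq] at hR1
    rw [hE2eq] at hR2
    rw [abs_neg] at hR1
    have hE1 : |E1| ≤ 2 * (|z| * t / v) ^ 3 := by
      calc |E1| ≤ |z * t / v| ^ (2 + 1) / (1 - |z * t / v|) := hR1
        _ ≤ |z * t / v| ^ 3 / (1 / 2) := by
            apply div_le_div_of_nonneg_left (by positivity) (by norm_num) (by linarith)
        _ = 2 * (|z| * t / v) ^ 3 := by rw [habs1]; ring
    have hE2 : |E2| ≤ 2 * (|z| * t / (1 - v)) ^ 3 := by
      calc |E2| ≤ |z * t / (1 - v)| ^ (2 + 1) / (1 - |z * t / (1 - v)|) := hR2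
        _ ≤ |z * t / (1 - v)| ^ 3 / (1 / 2) := by
            apply div_le_div_of_nonneg_left (by positivity) (by norm_num) (by linarith)
        _ = 2 * (|z| * t / (1 - v)) ^ 3 := by rw [habs2]; ring
    have hexpr : (v * Real.log (1 + z * t / v) + (1 - v) * Real.log (1 - z * t / (1 - v)))
        / t ^ 2 - c = (v * E1 + (1 - v) * E2) / t ^ 2 := by
      rw [hE1def, hE2def, hc]
      have hv0' : v ≠ 0 := ne_of_gt hv0
      have hv1'' : (1 : ℝ) - v ≠ 0 := ne_of_gt hv1'
      have ht' : t ≠ 0 := ne_of_gt ht0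
      generalize Real.log (1 + z * t / v) = A
      generalize Real.log (1 - z * t / (1 - v)) = B
      field_simp
      ring
    rw [hexpr]
    have ht2 : (0:ℝ) < t ^ 2 := by positivity
    rw [abs_div, abs_of_pos ht2, div_le_iff₀ ht2]
    calc |v * E1 + (1 - v) * E2| ≤ v * |E1| + (1 - v) * |E2| := by
          refine le_trans (abs_add_le _ _) ?_
          rw [abs_mul, abs_mul, abs_of_pos hv0, abs_of_pos hv1']
      _ ≤ v * (2 * (|z| * t / v) ^ 3) + (1 - v) * (2 * (|z| * t / (1 - v)) ^ 3) := by
          apply add_le_add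
          · exact mul_le_mul_of_nonneg_left hE1 (le_of_lt hv0)
          · exact mul_le_mul_of_nonneg_left hE2 (le_of_lt hv1')
      _ = C * t * t ^ 2 := by
          rw [hC]
          field_simp
  have h0 : Tendsto (fun t : ℝ => C * t) (nhdsWithin 0 (Set.Ioi 0)) (nhds 0) := by
    have : Tendsto (fun t : ℝ => C * t) (nhds 0) (nhds (C * 0)) :=
      (continuous_const.mul continuous_id).tendsto 0
    rw [mul_zero] at this
    exact this.mono_left nhdsWithin_le_nhds
  have hdiff : Tendsto (fun t : ℝ =>
      (v * Real.log (1 + z * t / v) + (1 - v) * Real.log (1 - z * t / (1 - v))) / t ^ 2 - c)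
      (nhdsWithin 0 (Set.Ioi 0)) (nhds 0) := by
    apply squeeze_zero_norm' _ h0
    filter_upwards [hbound] with t ht using ht
  have := hdiff.add_const c
  simpa using this

theorem stmt_1 (z v : ℝ) (hv0 : 0 < v) (hv1 : v < 1) :
    Tendsto (fun m : ℝ =>
        (1 + z / (Real.sqrt m * v)) ^ (m * v - 1) *
          (1 - z / (Real.sqrt m * (1 - v))) ^ (m * (1 - v) - 1))
      atTop (nhds (Real.exp (-z ^ 2 / (2 * v * (1 - v))))) := by
  have hv1' : 0 < 1 - v := by linarith
  set c : ℝ := -z ^ 2 / (2 * v * (1 - v)) with hc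
  have hinv : Tendsto (fun m : ℝ => (Real.sqrt m)⁻¹) atTop (nhds 0) := by
    have h1 : Tendsto (fun m : ℝ => Real.sqrt m⁻¹) atTop (nhds 0) := by
      have := (Real.continuous_sqrt.tendsto 0).comp tendsto_inv_atTop_zero
      rw [Real.sqrt_zero] at this
      exact this
    refine h1.congr fun m => ?_
    rw [Real.sqrt_inv]
  have hinv' : Tendsto (fun m : ℝ => (Real.sqrt m)⁻¹) atTop (nhdsWithin 0 (Set.Ioi 0)) := by
    apply tendsto_nhdsWithin_of_tendsto_nhds_of_eventually_within _ hinv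
    filter_upwards [eventually_gt_atTop (0:ℝ)] with m hm
    exact Set.mem_Ioi.2 (inv_pos.2 (Real.sqrt_pos.2 hm))
  have ha1 : Tendsto (fun m : ℝ => z / (Real.sqrt m * v)) atTop (nhds 0) := by
    have : Tendsto (fun m : ℝ => z / v * (Real.sqrt m)⁻¹) atTop (nhds (z / v * 0)) :=
      hinv.const_mul _
    rw [mul_zero] at this
    refine this.congr fun m => ?_
    rw [div_eq_mul_inv z (Real.sqrt m * v), mul_inv]
    ring
  have ha2 : Tendsto (fun m : ℝ => z / (Real.sqrt m * (1 - v))) atTop (nhds 0) := by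
    have : Tendsto (fun m : ℝ => z / (1 - v) * (Real.sqrt m)⁻¹) atTop (nhds (z / (1 - v) * 0)) :=
      hinv.const_mul _
    rw [mul_zero] at this
    refine this.congr fun m => ?_
    rw [div_eq_mul_inv z (Real.sqrt m * (1 - v)), mul_inv]
    ring
  have hpos : ∀ᶠ m : ℝ in atTop,
      0 < 1 + z / (Real.sqrt m * v) ∧ 0 < 1 - z / (Real.sqrt m * (1 - v)) ∧ 0 < m := by
    have e1 : ∀ᶠ m : ℝ in atTop, |z / (Real.sqrt m * v)| < 1 := by
      have := ha1.eventually (eventually_abs_sub_lt 0 one_pos)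
      simpa using this
    have e2 : ∀ᶠ m : ℝ in atTop, |z / (Real.sqrt m * (1 - v))| < 1 := by
      have := ha2.eventually (eventually_abs_sub_lt 0 one_pos)
      simpa using this
    filter_upwards [e1, e2, eventually_gt_atTop (0:ℝ)] with m h1 h2 h3
    refine ⟨?_, ?_, h3⟩
    · have := abs_lt.1 h1; linarith [this.1]
    · have := abs_lt.1 h2; linarith [this.2]
  have hL1 : Tendsto (fun m : ℝ => Real.log (1 + z / (Real.sqrt m * v))) atTop (nhds 0) := by
    have : Tendsto (fun m : ℝ => Real.log (1 + z / (Real.sqrt m * v))) atTop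
        (nhds (Real.log (1 + 0))) :=
      ((Real.continuousAt_log (by norm_num)).tendsto.comp ((tendsto_const_nhds).add ha1))
    simpa using this
  have hL2 : Tendsto (fun m : ℝ => Real.log (1 - z / (Real.sqrt m * (1 - v)))) atTop (nhds 0) := by
    have : Tendsto (fun m : ℝ => Real.log (1 - z / (Real.sqrt m * (1 - v)))) atTop
        (nhds (Real.log (1 - 0))) :=
      ((Real.continuousAt_log (by norm_num)).tendsto.comp ((tendsto_const_nhds).sub ha2))
    simpa using this
  have hmain : Tendsto (fun m : ℝ =>
      m * (v * Real.log (1 + z / (Real.sqrt m * v)) +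
        (1 - v) * Real.log (1 - z / (Real.sqrt m * (1 - v))))) atTop (nhds c) := by
    have hcomp := (key_lim z v hv0 hv1).comp hinv'
    refine hcomp.congr' ?_
    filter_upwards [eventually_gt_atTop (0:ℝ)] with m hm
    have hs : Real.sqrt m > 0 := Real.sqrt_pos.2 hm
    have hsq : ((Real.sqrt m)⁻¹) ^ 2 = m⁻¹ := by
      rw [← Real.sq_sqrt (le_of_lt hm)]
      field_simp
      rw [Real.sqrt_sq hs.le]
    simp only [Function.comp_apply]
    rw [hsq]
    have h1 : z * (Real.sqrt m)⁻¹ / v = z / (Real.sqrt m * v) := by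
      rw [div_eq_mul_inv z (Real.sqrt m * v), mul_inv]; ring
    have h2 : z * (Real.sqrt m)⁻¹ / (1 - v) = z / (Real.sqrt m * (1 - v)) := by
      rw [div_eq_mul_inv z (Real.sqrt m * (1 - v)), mul_inv]; ring
    rw [h1, h2, div_eq_mul_inv, inv_inv, mul_comm]
  have hexp : Tendsto (fun m : ℝ =>
      (m * v - 1) * Real.log (1 + z / (Real.sqrt m * v)) +
        (m * (1 - v) - 1) * Real.log (1 - z / (Real.sqrt m * (1 - v)))) atTop (nhds c) := by
    have := (hmain.sub hL1).sub hL2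
    rw [sub_zero, sub_zero] at this
    refine this.congr fun m => ?_
    ring
  have hfinal := (Real.continuous_exp.tendsto c).comp hexp
  refine hfinal.congr' ?_
  filter_upwards [hpos] with m hm
  obtain ⟨h1, h2, h3⟩ := hm
  simp only [Function.comp_apply]
  rw [Real.exp_add, Real.rpow_def_of_pos h1, Real.rpow_def_of_pos h2]
  ring_nf
end

section
/- Let v ∈ (0,1) be fixed and for each m let f_m(z) = [Γ(m)/(Γ(mv)Γ(m(1−v)))] · m^{−1/2} · (z/√m + v)^{mv−1}(1 − z/√m − v)^{m(1−v)−1} for z with 0 < z/√m + v < 1. Then for every fixed z ∈ ℝ, f_m(z) → (1/√(2π v(1−v))) exp(−z²/(2v(1−v))) as m → ∞. -/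
open Filter Real Set

noncomputable def stC : ℝ := Real.log (Real.sqrt (2 * Real.pi))

noncomputable def dlt (n : ℕ) : ℝ :=
  Real.log (Real.Gamma n) - (((n:ℝ) - 1/2) * Real.log n - n + stC)


lemma gamma_nat_log (n : ℕ) (hn : 1 ≤ n) :
    Real.log (Real.Gamma n) = Real.log n.factorial - Real.log n := by
  obtain ⟨k, rfl⟩ := Nat.exists_eq_add_of_le hn
  have h1 : Real.Gamma ((1 + k : ℕ) : ℝ) = k.factorial := by
    push_cast; rw [add_comm, Real.Gamma_nat_eq_factorial]
  have h2 : ((1 + k : ℕ).factorial : ℝ) = (1 + k : ℕ) * k.factorial := by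
    rw [add_comm 1 k, Nat.factorial_succ]; push_cast; ring
  rw [h1, h2, Real.log_mul (by positivity) (by positivity)]
  ring

lemma stirling_nat : Tendsto dlt atTop (nhds 0) := by
  have h := Stirling.tendsto_stirlingSeq_sqrt_pi
  have h2 : Tendsto (fun n : ℕ => Real.log (Stirling.stirlingSeq n)) atTop
      (nhds (Real.log (Real.sqrt Real.pi))) :=
    (Real.continuousAt_log (by positivity)).tendsto.comp h
  have key : ∀ᶠ n : ℕ in atTop, Real.log (Stirling.stirlingSeq n) + (1/2 * Real.log 2 - stC)
      = dlt n := by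
    filter_upwards [eventually_ge_atTop 1] with n hn
    have hn0 : (0:ℝ) < n := by exact_mod_cast hn
    simp only [dlt]
    rw [Stirling.log_stirlingSeq_formula, gamma_nat_log n hn,
      Real.log_mul (by norm_num) (ne_of_gt hn0),
      Real.log_div (ne_of_gt hn0) (Real.exp_ne_zero 1), Real.log_exp]
    ring
  have hlim : Real.log (Real.sqrt Real.pi) + (1/2 * Real.log 2 - stC) = 0 := by
    rw [stC, Real.log_sqrt Real.pi_pos.le, Real.log_sqrt (by positivity),
      Real.log_mul (by norm_num) (ne_of_gt Real.pi_pos)]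
    ring
  have := (h2.add_const (1/2 * Real.log 2 - stC))
  rw [hlim] at this
  exact this.congr' key

lemma logGamma_upper {x : ℝ} {n : ℕ} (hn : 1 ≤ n) (h1 : (n:ℝ) ≤ x) (h2 : x ≤ n+1) :
    Real.log (Real.Gamma x) ≤ Real.log (Real.Gamma n) + (x - n) * Real.log n := by
  have hn0 : (0:ℝ) < n := by exact_mod_cast hn
  have hc := Real.convexOn_log_Gamma.2 (mem_Ioi.2 hn0) (mem_Ioi.2 (by linarith : (0:ℝ) < n+1))
    (by linarith : (0:ℝ) ≤ (n:ℝ)+1-x) (by linarith : (0:ℝ) ≤ x - n) (by ring)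
  have harg : ((n:ℝ)+1-x) • (n:ℝ) + (x - n) • ((n:ℝ)+1) = x := by
    simp only [smul_eq_mul]; ring
  rw [harg] at hc
  have hG : (Real.log ∘ Real.Gamma) ((n:ℝ)+1) = Real.log (Real.Gamma n) + Real.log n := by
    simp only [Function.comp_apply]
    rw [Real.Gamma_add_one (ne_of_gt hn0), Real.log_mul (ne_of_gt hn0)
      (ne_of_gt (Real.Gamma_pos_of_pos hn0))]
    ring
  simp only [Function.comp_apply] at hc hG
  rw [hG] at hc
  calc Real.log (Real.Gamma x) ≤ ((n:ℝ)+1-x) * Real.log (Real.Gamma n)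
        + (x-n) * (Real.log (Real.Gamma n) + Real.log n) := hc
    _ = Real.log (Real.Gamma n) + (x - n) * Real.log n := by ring

lemma logGamma_lower {x : ℝ} {n : ℕ} (hn : 2 ≤ n) (h1 : (n:ℝ) ≤ x) :
    Real.log (Real.Gamma n) + (x - n) * Real.log ((n:ℝ)-1) ≤ Real.log (Real.Gamma x) := by
  rcases eq_or_lt_of_le h1 with rfl | hlt
  · simp
  have hn1 : (1:ℝ) ≤ (n:ℝ) - 1 := by
    have : (2:ℝ) ≤ n := by exact_mod_cast hn
    linarith
  have hs := Real.convexOn_log_Gamma.slope_mono_adjacent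
    (mem_Ioi.2 (by linarith : (0:ℝ) < (n:ℝ)-1)) (mem_Ioi.2 (by linarith : (0:ℝ) < x))
    (by linarith : (n:ℝ)-1 < n) hlt
  have hG : (Real.log ∘ Real.Gamma) (n:ℝ) - (Real.log ∘ Real.Gamma) ((n:ℝ)-1)
      = Real.log ((n:ℝ)-1) := by
    simp only [Function.comp_apply]
    have : (n:ℝ) = ((n:ℝ)-1) + 1 := by ring
    rw [this, Real.Gamma_add_one (by linarith), Real.log_mul (by linarith)
      (ne_of_gt (Real.Gamma_pos_of_pos (by linarith)))]
    ring
  rw [hG] at hs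
  have h3 : (n:ℝ) - ((n:ℝ)-1) = 1 := by ring
  rw [h3, div_one] at hs
  have h4 : 0 < x - n := by linarith
  simp only [Function.comp_apply] at hs
  rw [le_div_iff₀ h4] at hs
  linarith




lemma floor_aux : Tendsto (fun x : ℝ => 2/((⌊x⌋₊:ℝ)-1)) atTop (nhds 0) := by
  have h2 : Tendsto (fun x : ℝ => ((⌊x⌋₊:ℝ)-1)) atTop atTop := by
    refine tendsto_atTop_mono (fun x => ?_)
      (tendsto_atTop_add_const_right atTop (-2 : ℝ) tendsto_id)
    have := Nat.sub_one_lt_floor x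
    simp only [id_eq]
    linarith
  simpa [div_eq_mul_inv] using (tendsto_inv_atTop_zero.comp h2).const_mul (2:ℝ)

set_option maxHeartbeats 1000000 in
lemma key_bound {x : ℝ} (hx : 3 ≤ x) :
    |Real.log (Real.Gamma x) - ((x - 1/2) * Real.log x - x + stC) - dlt ⌊x⌋₊|
      ≤ 2/((⌊x⌋₊:ℝ)-1) := by
  set n := ⌊x⌋₊ with hn
  have hx0 : (0:ℝ) < x := by linarith
  have hn3 : 3 ≤ n := by rw [hn]; exact Nat.le_floor (by exact_mod_cast hx)
  have hn3' : (3:ℝ) ≤ n := by exact_mod_cast hn3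
  have hnx : (n:ℝ) ≤ x := Nat.floor_le hx0.le
  have hxn : x ≤ (n:ℝ) + 1 := (Nat.lt_floor_add_one x).le
  have hn0 : (0:ℝ) < n := by linarith
  have ht0 : 0 ≤ x - n := by linarith
  have ht1 : x - n ≤ 1 := by linarith
  -- log bounds
  have L1 : Real.log x - Real.log n ≤ (x - n)/n := by
    have h := Real.log_le_sub_one_of_pos (show (0:ℝ) < x/n from div_pos hx0 hn0)
    rw [Real.log_div (ne_of_gt hx0) (ne_of_gt hn0)] at h
    have e : x/n - 1 = (x - n)/n := by field_simp
    linarith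
  have L2 : (x - n)/x ≤ Real.log x - Real.log n := by
    have h := Real.log_le_sub_one_of_pos (show (0:ℝ) < (n:ℝ)/x from div_pos hn0 hx0)
    rw [Real.log_div (ne_of_gt hn0) (ne_of_gt hx0)] at h
    have e : (n:ℝ)/x - 1 = -((x - n)/x) := by field_simp; ring
    linarith
  have L3 : Real.log n - Real.log ((n:ℝ)-1) ≤ 1/((n:ℝ)-1) := by
    have h := Real.log_le_sub_one_of_pos
      (show (0:ℝ) < (n:ℝ)/((n:ℝ)-1) from div_pos hn0 (by linarith))
    rw [Real.log_div (ne_of_gt hn0) (by linarith)] at h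
    have h' : ((n:ℝ)-1) ≠ 0 := by linarith
    have e : (n:ℝ)/((n:ℝ)-1) - 1 = 1/((n:ℝ)-1) := by field_simp; ring
    linarith
  have hxh : (0:ℝ) ≤ x - 1/2 := by linarith
  have hA : (x - 1/2) * (Real.log x - Real.log n) ≤ (x - 1/2) * ((x - n)/n) :=
    mul_le_mul_of_nonneg_left L1 hxh
  have hB : (x - 1/2) * ((x - n)/x) ≤ (x - 1/2) * (Real.log x - Real.log n) :=
    mul_le_mul_of_nonneg_left L2 hxh
  -- upper bound
  have e4 : (x - n) - (x - 1/2) * ((x - n)/x) = (x - n)/(2*x) := by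
    field_simp; ring
  have e5 : (x - n)/(2*x) ≤ 2/((n:ℝ)-1) := by
    rw [div_le_div_iff₀ (by linarith) (by linarith)]
    nlinarith
  have hsecond_ub : (x - n) - (x - 1/2) * (Real.log x - Real.log n) ≤ 2/((n:ℝ)-1) := by
    linarith
  have hub : Real.log (Real.Gamma x) - ((x - 1/2) * Real.log x - x + stC) - dlt n
      ≤ 2/((n:ℝ)-1) := by
    have h := logGamma_upper (by omega) hnx hxn
    rw [dlt]
    linarith [hsecond_ub, h]
  -- lower bound
  have e1' : (x - n) - (x - 1/2) * ((x - n)/n) = -(((x - n)*(x - n - 1/2))/n) := by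
    field_simp; ring
  have e2' : ((x - n)*(x - n - 1/2))/n ≤ 1/((n:ℝ)-1) := by
    rw [div_le_div_iff₀ hn0 (by linarith)]
    nlinarith [mul_le_mul_of_nonneg_right (show (x-(n:ℝ))*(x-(n:ℝ)-1/2) ≤ 1/2 by nlinarith)
      (by linarith : (0:ℝ) ≤ (n:ℝ)-1)]
  have hsecond_lb : -(1/((n:ℝ)-1)) ≤ (x - n) - (x - 1/2) * (Real.log x - Real.log n) := by
    linarith
  have hlog_nn : 0 ≤ Real.log n - Real.log ((n:ℝ)-1) := by
    have h2 : Real.log ((n:ℝ)-1) ≤ Real.log n := by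
      apply Real.log_le_log (by linarith) (by linarith)
    linarith
  have hC : (x - n) * (Real.log n - Real.log ((n:ℝ)-1)) ≤ 1/((n:ℝ)-1) := by
    calc (x - n) * (Real.log n - Real.log ((n:ℝ)-1)) ≤ 1 * (1/((n:ℝ)-1)) :=
        mul_le_mul ht1 L3 hlog_nn (by norm_num)
      _ = _ := one_mul _
  have hlb : -(2/((n:ℝ)-1)) ≤
      Real.log (Real.Gamma x) - ((x - 1/2) * Real.log x - x + stC) - dlt n := by
    have h := logGamma_lower (by omega) hnx
    rw [dlt]
    have h2u : ∀ u : ℝ, 1/((n:ℝ)-1) = u → -(2*u) ≤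
        Real.log (Real.Gamma x) - ((x - 1/2) * Real.log x - x + stC) -
        (Real.log (Real.Gamma ↑n) - (((n:ℝ) - 1/2) * Real.log ↑n - ↑n + stC)) := by
      intro u hu
      rw [hu] at hC hsecond_lb
      linarith [hsecond_lb, hC, h]
    have := h2u (1/((n:ℝ)-1)) rfl
    have e : 2/((n:ℝ)-1) = 2*(1/((n:ℝ)-1)) := by ring
    rw [e]
    linarith [this]
  rw [abs_le]
  exact ⟨hlb, hub⟩


lemma stirling_real_log :
    Tendsto (fun x : ℝ => Real.log (Real.Gamma x) - ((x - 1/2) * Real.log x - x + stC))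
      atTop (nhds 0) := by
  have h1 : Tendsto (fun x : ℝ => dlt ⌊x⌋₊) atTop (nhds 0) :=
    stirling_nat.comp tendsto_nat_floor_atTop
  have h2 : Tendsto (fun x : ℝ =>
      (Real.log (Real.Gamma x) - ((x - 1/2) * Real.log x - x + stC)) - dlt ⌊x⌋₊)
      atTop (nhds 0) := by
    apply squeeze_zero_norm' _ floor_aux
    filter_upwards [eventually_ge_atTop (3:ℝ)] with x hx
    simpa [Real.norm_eq_abs] using key_bound hx
  simpa using h2.add h1

lemma stirling_real :
    Tendsto (fun x : ℝ => Real.Gamma x /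
      (Real.sqrt (2*Real.pi) * x ^ (x - 1/2 : ℝ) * Real.exp (-x))) atTop (nhds 1) := by
  have h := (Real.continuous_exp.tendsto 0).comp stirling_real_log
  rw [Real.exp_zero] at h
  refine h.congr' ?_
  filter_upwards [eventually_gt_atTop (0:ℝ)] with x hx
  show Real.exp _ = _
  rw [Real.exp_sub, Real.exp_log (Real.Gamma_pos_of_pos hx),
    show (x - 1/2) * Real.log x - x + stC = Real.log x * (x-1/2) + ((-x) + stC) by ring,
    Real.exp_add, Real.exp_add, ← Real.rpow_def_of_pos hx, stC,
    Real.exp_log (by positivity : (0:ℝ) < Real.sqrt (2*Real.pi))]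
  ring

lemma log_est {x : ℝ} (h : |x| ≤ 1/2) : |Real.log (1-x) + (x + x^2/2)| ≤ 2*|x|^3 := by
  have h1 : |x| < 1 := by linarith
  have h2 := Real.abs_log_sub_add_sum_range_le h1 2
  have h3 : ∑ i ∈ Finset.range 2, x^(i+1)/(i+1) = x + x^2/2 := by
    simp [Finset.sum_range_succ]; norm_num
  rw [h3] at h2
  have h4 : |x|^3/(1-|x|) ≤ 2*|x|^3 := by
    rw [div_le_iff₀ (by linarith)]
    nlinarith [abs_nonneg x, pow_nonneg (abs_nonneg x) 3]
  calc |Real.log (1-x) + (x + x^2/2)| = |x + x^2/2 + Real.log (1-x)| := by ring_nf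
    _ ≤ |x|^3/(1-|x|) := h2
    _ ≤ 2*|x|^3 := h4

lemma sqrtAtTop : Filter.Tendsto Real.sqrt Filter.atTop Filter.atTop := by
  rw [Filter.tendsto_atTop]
  intro b
  filter_upwards [Filter.eventually_ge_atTop (max 0 (b^2))] with x hx
  have h1 : Real.sqrt (b^2) ≤ Real.sqrt x := Real.sqrt_le_sqrt (le_trans (le_max_right _ _) hx)
  rw [Real.sqrt_sq_eq_abs] at h1
  exact le_trans (le_abs_self b) h1

lemma inv_sqrt_zero : Filter.Tendsto (fun m : ℝ => (Real.sqrt m)⁻¹) Filter.atTop (nhds 0) :=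
  tendsto_inv_atTop_zero.comp sqrtAtTop

lemma exp_limit (v z : ℝ) (hv0 : 0 < v) (hv1 : v < 1) :
    Tendsto (fun m : ℝ => (m*v - 1) * Real.log (1 + z/(Real.sqrt m * v))
      + (m*(1-v) - 1) * Real.log (1 - z/(Real.sqrt m * (1-v)))) atTop
      (nhds (-z^2/(2*v*(1-v)))) := by
  have hv1' : 0 < 1 - v := by linarith
  -- a and b tend to zero
  have ha0 : Tendsto (fun m : ℝ => z/(Real.sqrt m * v)) atTop (nhds 0) := by
    have := inv_sqrt_zero.const_mul (z/v)
    rw [mul_zero] at this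
    refine this.congr fun m => ?_
    rw [mul_comm (Real.sqrt m) v, ← div_div, div_eq_mul_inv]; ring
  have hb0 : Tendsto (fun m : ℝ => z/(Real.sqrt m * (1-v))) atTop (nhds 0) := by
    have := inv_sqrt_zero.const_mul (z/(1-v))
    rw [mul_zero] at this
    refine this.congr fun m => ?_
    rw [mul_comm (Real.sqrt m) (1-v), ← div_div, div_eq_mul_inv]; ring
  have hlog1 : Tendsto (fun m : ℝ => Real.log (1 + z/(Real.sqrt m * v))) atTop (nhds 0) := by
    have h1 : Tendsto (fun m : ℝ => 1 + z/(Real.sqrt m * v)) atTop (nhds 1) := by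
      simpa using (tendsto_const_nhds (x := (1:ℝ))).add ha0
    have := (Real.continuousAt_log (by norm_num : (1:ℝ) ≠ 0)).tendsto.comp h1
    simpa [Function.comp_def] using this
  have hlog2 : Tendsto (fun m : ℝ => Real.log (1 - z/(Real.sqrt m * (1-v)))) atTop (nhds 0) := by
    have h1 : Tendsto (fun m : ℝ => 1 - z/(Real.sqrt m * (1-v))) atTop (nhds 1) := by
      simpa using (tendsto_const_nhds (x := (1:ℝ))).sub hb0
    have := (Real.continuousAt_log (by norm_num : (1:ℝ) ≠ 0)).tendsto.comp h1
    simpa [Function.comp_def] using this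
  -- the main quadratic term
  have hF : Tendsto (fun m : ℝ => m*v*Real.log (1 + z/(Real.sqrt m * v))
      + m*(1-v)*Real.log (1 - z/(Real.sqrt m * (1-v)))) atTop
      (nhds (-z^2/(2*v*(1-v)))) := by
    have key : Tendsto (fun m : ℝ => (m*v*Real.log (1 + z/(Real.sqrt m * v))
        + m*(1-v)*Real.log (1 - z/(Real.sqrt m * (1-v)))) - (-z^2/(2*v*(1-v)))) atTop
        (nhds 0) := by
      apply squeeze_zero_norm' ?_ ((inv_sqrt_zero.const_mul
        (2*|z|^3/v^2 + 2*|z|^3/(1-v)^2)).congr (fun m => (div_eq_mul_inv _ _).symm) |>.mono_right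
        (by rw [mul_zero]))
      filter_upwards [eventually_ge_atTop ((2*|z|/v + 2*|z|/(1-v) + 1)^2),
        eventually_ge_atTop (0:ℝ)] with m hm hm0
      set s := Real.sqrt m with hsdef
      have hs1 : 2*|z|/v + 2*|z|/(1-v) + 1 ≤ s := by
        have h1 : Real.sqrt ((2*|z|/v + 2*|z|/(1-v) + 1)^2) ≤ s := Real.sqrt_le_sqrt hm
        rwa [Real.sqrt_sq (by positivity)] at h1
      have hs0 : 0 < s := lt_of_lt_of_le (by positivity) hs1
      have hmsq : m = s^2 := (Real.sq_sqrt hm0).symm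
      have habs1 : |z/(s*v)| ≤ 1/2 := by
        rw [abs_div, abs_of_pos (mul_pos hs0 hv0), div_le_iff₀ (mul_pos hs0 hv0)]
        have h2 : 2*|z|/v ≤ s := by
          have := div_nonneg (by positivity : (0:ℝ) ≤ 2*|z|) hv1'.le
          linarith
        rw [div_le_iff₀ hv0] at h2
        nlinarith [abs_nonneg z]
      have habs2 : |z/(s*(1-v))| ≤ 1/2 := by
        rw [abs_div, abs_of_pos (mul_pos hs0 hv1'), div_le_iff₀ (mul_pos hs0 hv1')]
        have h2 : 2*|z|/(1-v) ≤ s := by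
          have := div_nonneg (by positivity : (0:ℝ) ≤ 2*|z|) hv0.le
          linarith
        rw [div_le_iff₀ hv1'] at h2
        nlinarith [abs_nonneg z]
      -- first term estimate
      have est1 : |Real.log (1 + z/(s*v)) - z/(s*v) + (z/(s*v))^2/2| ≤ 2*|z/(s*v)|^3 := by
        have h' := log_est (x := -(z/(s*v))) (by rwa [abs_neg])
        rw [show (1:ℝ) - -(z/(s*v)) = 1 + z/(s*v) by ring] at h'
        rw [show Real.log (1 + z/(s*v)) + (-(z/(s*v)) + (-(z/(s*v)))^2/2)
          = Real.log (1 + z/(s*v)) - z/(s*v) + (z/(s*v))^2/2 by ring, abs_neg] at h'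
        exact h'
      have est2 : |Real.log (1 - z/(s*(1-v))) + (z/(s*(1-v)) + (z/(s*(1-v)))^2/2)|
          ≤ 2*|z/(s*(1-v))|^3 := log_est habs2
      have hmv : 0 < m := by nlinarith
      have id1 : m*v*(Real.log (1 + z/(s*v)) - z/(s*v) + (z/(s*v))^2/2)
          = m*v*Real.log (1 + z/(s*v)) - s*z + z^2/(2*v) := by
        rw [hmsq]; field_simp
      have id2 : m*(1-v)*(Real.log (1 - z/(s*(1-v))) + (z/(s*(1-v)) + (z/(s*(1-v)))^2/2))
          = m*(1-v)*Real.log (1 - z/(s*(1-v))) + s*z + z^2/(2*(1-v)) := by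
        rw [hmsq]; field_simp; ring
      have b1 : |m*v*Real.log (1 + z/(s*v)) - s*z + z^2/(2*v)| ≤ m*v*(2*|z/(s*v)|^3) := by
        rw [← id1, abs_mul, abs_of_pos (mul_pos hmv hv0)]
        exact mul_le_mul_of_nonneg_left est1 (mul_pos hmv hv0).le
      have b2 : |m*(1-v)*Real.log (1 - z/(s*(1-v))) + s*z + z^2/(2*(1-v))|
          ≤ m*(1-v)*(2*|z/(s*(1-v))|^3) := by
        rw [← id2, abs_mul, abs_of_pos (mul_pos hmv hv1')]
        exact mul_le_mul_of_nonneg_left est2 (mul_pos hmv hv1').le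
      have c1 : m*v*(2*|z/(s*v)|^3) = (2*|z|^3/v^2)/s := by
        rw [abs_div, abs_of_pos (mul_pos hs0 hv0), hmsq]
        field_simp
      have c2 : m*(1-v)*(2*|z/(s*(1-v))|^3) = (2*|z|^3/(1-v)^2)/s := by
        rw [abs_div, abs_of_pos (mul_pos hs0 hv1'), hmsq]
        field_simp
      have split : (m*v*Real.log (1 + z/(s*v)) + m*(1-v)*Real.log (1 - z/(s*(1-v))))
          - (-z^2/(2*v*(1-v)))
          = (m*v*Real.log (1 + z/(s*v)) - s*z + z^2/(2*v))
            + (m*(1-v)*Real.log (1 - z/(s*(1-v))) + s*z + z^2/(2*(1-v))) := by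
        field_simp
        ring
      rw [Real.norm_eq_abs, split]
      calc |(m*v*Real.log (1 + z/(s*v)) - s*z + z^2/(2*v))
            + (m*(1-v)*Real.log (1 - z/(s*(1-v))) + s*z + z^2/(2*(1-v)))|
          ≤ |m*v*Real.log (1 + z/(s*v)) - s*z + z^2/(2*v)|
            + |m*(1-v)*Real.log (1 - z/(s*(1-v))) + s*z + z^2/(2*(1-v))| := abs_add_le _ _
        _ ≤ m*v*(2*|z/(s*v)|^3) + m*(1-v)*(2*|z/(s*(1-v))|^3) := add_le_add b1 b2
        _ = (2*|z|^3/v^2)/s + (2*|z|^3/(1-v)^2)/s := by rw [c1, c2]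
        _ = (2*|z|^3/v^2 + 2*|z|^3/(1-v)^2) * s⁻¹ := by ring
    have := key.add_const (-z^2/(2*v*(1-v)))
    simpa using this
  have final := (hF.sub hlog1).sub hlog2
  rw [sub_zero, sub_zero] at final
  refine final.congr fun m => ?_
  ring


theorem stmt_17 (v : ℝ) (hv0 : 0 < v) (hv1 : v < 1) (z : ℝ) :
    Tendsto (fun m : ℝ =>
        Real.Gamma m / (Real.Gamma (m * v) * Real.Gamma (m * (1 - v))) *
          m ^ (-(1 : ℝ) / 2) *
          (z / Real.sqrt m + v) ^ (m * v - 1) *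
          (1 - z / Real.sqrt m - v) ^ (m * (1 - v) - 1))
      atTop
      (nhds ((1 / Real.sqrt (2 * Real.pi * v * (1 - v))) *
        Real.exp (-z ^ 2 / (2 * v * (1 - v))))) := by
  have hv1' : 0 < 1 - v := by linarith
  -- the comparison function
  set St : ℝ → ℝ := fun x => Real.sqrt (2*Real.pi) * x ^ (x - 1/2 : ℝ) * Real.exp (-x) with hSt
  have h1 : Tendsto (fun m : ℝ => Real.Gamma m / St m) atTop (nhds 1) := stirling_real
  have hmv : Tendsto (fun m : ℝ => m * v) atTop atTop :=
    Tendsto.atTop_mul_const hv0 tendsto_id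
  have hmv' : Tendsto (fun m : ℝ => m * (1 - v)) atTop atTop :=
    Tendsto.atTop_mul_const hv1' tendsto_id
  have h2 : Tendsto (fun m : ℝ => St (m*v) / Real.Gamma (m*v)) atTop (nhds 1) := by
    have h := (h1.comp hmv).inv₀ one_ne_zero
    rw [inv_one] at h
    exact h.congr fun m => inv_div _ _
  have h3 : Tendsto (fun m : ℝ => St (m*(1-v)) / Real.Gamma (m*(1-v))) atTop (nhds 1) := by
    have h := (h1.comp hmv').inv₀ one_ne_zero
    rw [inv_one] at h
    exact h.congr fun m => inv_div _ _
  have h5 : Tendsto (fun m : ℝ => Real.exp ((m*v - 1) * Real.log (1 + z/(Real.sqrt m * v))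
      + (m*(1-v) - 1) * Real.log (1 - z/(Real.sqrt m * (1-v))))) atTop
      (nhds (Real.exp (-z^2/(2*v*(1-v))))) :=
    (Real.continuous_exp.tendsto _).comp (exp_limit v z hv0 hv1)
  have hG : Tendsto (fun m : ℝ => Real.Gamma m / St m * (St (m*v) / Real.Gamma (m*v))
      * (St (m*(1-v)) / Real.Gamma (m*(1-v))) * (1 / Real.sqrt (2 * Real.pi * v * (1 - v)))
      * Real.exp ((m*v - 1) * Real.log (1 + z/(Real.sqrt m * v))
        + (m*(1-v) - 1) * Real.log (1 - z/(Real.sqrt m * (1-v))))) atTop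
      (nhds ((1 / Real.sqrt (2 * Real.pi * v * (1 - v))) *
        Real.exp (-z ^ 2 / (2 * v * (1 - v))))) := by
    have := (((h1.mul h2).mul h3).mul
      (tendsto_const_nhds (x := 1 / Real.sqrt (2 * Real.pi * v * (1 - v))))).mul h5
    simpa using this
  refine Tendsto.congr' ?_ hG
  symm
  filter_upwards [eventually_ge_atTop ((2*|z|/v + 2*|z|/(1-v) + 1)^2),
    eventually_gt_atTop (0:ℝ)] with m hm hm0
  set s := Real.sqrt m with hsdef
  have hs1 : 2*|z|/v + 2*|z|/(1-v) + 1 ≤ s := by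
    have h' : Real.sqrt ((2*|z|/v + 2*|z|/(1-v) + 1)^2) ≤ s := Real.sqrt_le_sqrt hm
    rwa [Real.sqrt_sq (by positivity)] at h'
  have hs0 : 0 < s := lt_of_lt_of_le (by positivity) hs1
  have habs1 : |z/(s*v)| ≤ 1/2 := by
    rw [abs_div, abs_of_pos (mul_pos hs0 hv0), div_le_iff₀ (mul_pos hs0 hv0)]
    have h2' : 2*|z|/v ≤ s := by
      have := div_nonneg (by positivity : (0:ℝ) ≤ 2*|z|) hv1'.le
      linarith
    rw [div_le_iff₀ hv0] at h2'
    nlinarith [abs_nonneg z]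
  have habs2 : |z/(s*(1-v))| ≤ 1/2 := by
    rw [abs_div, abs_of_pos (mul_pos hs0 hv1'), div_le_iff₀ (mul_pos hs0 hv1')]
    have h2' : 2*|z|/(1-v) ≤ s := by
      have := div_nonneg (by positivity : (0:ℝ) ≤ 2*|z|) hv0.le
      linarith
    rw [div_le_iff₀ hv1'] at h2'
    nlinarith [abs_nonneg z]
  have ha := abs_le.1 habs1
  have hb := abs_le.1 habs2
  have hap : (0:ℝ) < 1 + z/(s*v) := by linarith [ha.1]
  have hbp : (0:ℝ) < 1 - z/(s*(1-v)) := by linarith [hb.2]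
  have base1 : z/s + v = v * (1 + z/(s*v)) := by field_simp; ring
  have base2 : 1 - z/s - v = (1-v) * (1 - z/(s*(1-v))) := by field_simp; ring
  have hpos1 : (0:ℝ) < z/s + v := by rw [base1]; exact mul_pos hv0 hap
  have hpos2 : (0:ℝ) < 1 - z/s - v := by rw [base2]; exact mul_pos hv1' hbp
  have hΓ1 : 0 < Real.Gamma m := Real.Gamma_pos_of_pos hm0
  have hΓ2 : 0 < Real.Gamma (m*v) := Real.Gamma_pos_of_pos (mul_pos hm0 hv0)
  have hΓ3 : 0 < Real.Gamma (m*(1-v)) := Real.Gamma_pos_of_pos (mul_pos hm0 hv1')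
  have h2pi : (0:ℝ) < Real.sqrt (2*Real.pi) := by positivity
  have hcpos : (0:ℝ) < Real.sqrt (2 * Real.pi * v * (1 - v)) := by positivity
  calc Real.Gamma m / (Real.Gamma (m * v) * Real.Gamma (m * (1 - v))) *
          m ^ (-(1 : ℝ) / 2) *
          (z / s + v) ^ (m * v - 1) *
          (1 - z / s - v) ^ (m * (1 - v) - 1)
      = Real.exp ((Real.log (Real.Gamma m)
            - (Real.log (Real.Gamma (m*v)) + Real.log (Real.Gamma (m*(1-v)))))
          + Real.log m * (-(1:ℝ)/2)
          + Real.log (z/s + v) * (m*v - 1)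
          + Real.log (1 - z/s - v) * (m*(1-v) - 1)) := by
        rw [Real.exp_add, Real.exp_add, Real.exp_add, Real.exp_sub, Real.exp_add,
          ← Real.rpow_def_of_pos hm0, ← Real.rpow_def_of_pos hpos1,
          ← Real.rpow_def_of_pos hpos2, Real.exp_log hΓ1, Real.exp_log hΓ2,
          Real.exp_log hΓ3]
    _ = Real.exp ((Real.log (Real.Gamma m)
            - (Real.log (Real.sqrt (2*Real.pi)) + Real.log m * (m - 1/2) + (-m)))
          + ((Real.log (Real.sqrt (2*Real.pi)) + Real.log (m*v) * (m*v - 1/2) + (-(m*v)))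
            - Real.log (Real.Gamma (m*v)))
          + ((Real.log (Real.sqrt (2*Real.pi)) + Real.log (m*(1-v)) * (m*(1-v) - 1/2)
              + (-(m*(1-v)))) - Real.log (Real.Gamma (m*(1-v))))
          + (0 - Real.log (Real.sqrt (2 * Real.pi * v * (1 - v))))
          + ((m*v - 1) * Real.log (1 + z/(s * v))
            + (m*(1-v) - 1) * Real.log (1 - z/(s * (1-v))))) := by
        congr 1
        rw [Real.log_mul (ne_of_gt hm0) (ne_of_gt hv0),
          Real.log_mul (ne_of_gt hm0) (ne_of_gt hv1'),
          base1, base2,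
          Real.log_mul (ne_of_gt hv0) (ne_of_gt hap),
          Real.log_mul (ne_of_gt hv1') (ne_of_gt hbp),
          Real.log_sqrt (by positivity : (0:ℝ) ≤ 2*Real.pi),
          Real.log_sqrt (by positivity : (0:ℝ) ≤ 2*Real.pi*v*(1-v)),
          Real.log_mul (by positivity : (2*Real.pi*v : ℝ) ≠ 0) (ne_of_gt hv1'),
          Real.log_mul (by positivity : (2*Real.pi : ℝ) ≠ 0) (ne_of_gt hv0)]
        ring
    _ = Real.Gamma m / St m * (St (m*v) / Real.Gamma (m*v))
          * (St (m*(1-v)) / Real.Gamma (m*(1-v)))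
          * (1 / Real.sqrt (2 * Real.pi * v * (1 - v)))
          * Real.exp ((m*v - 1) * Real.log (1 + z/(s * v))
            + (m*(1-v) - 1) * Real.log (1 - z/(s * (1-v)))) := by
        simp only [hSt]
        rw [Real.exp_add, Real.exp_add, Real.exp_add, Real.exp_add,
          Real.exp_sub, Real.exp_sub, Real.exp_sub, Real.exp_sub,
          Real.exp_add, Real.exp_add, Real.exp_add, Real.exp_add, Real.exp_add,
          Real.exp_add, Real.exp_zero, ← Real.rpow_def_of_pos hm0,
          ← Real.rpow_def_of_pos (mul_pos hm0 hv0),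
          ← Real.rpow_def_of_pos (mul_pos hm0 hv1'),
          Real.exp_log hΓ2, Real.exp_log hΓ3, Real.exp_log h2pi, Real.exp_log hΓ1,
          Real.exp_log hcpos]
end
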